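/- (Sufficiency direction of the matrix S-lemma, Theorem 1, in the scalar-multiplier rank-one case.) Let H, C, A be symmetric real matrices (H: m×m, C: n×n, A: d×d replaced appropriately), F an m×n matrix, G an m×d matrix, B a d×n matrix, P a symmetric PSD d×d matrix, and λ ≥ 0. If the (m+n+d)×(m+n+d) block matrix [[H, F, G],[Fᵀ, C - λIₙ, Bᵀ],[Gᵀ, B, A + λP]] is positive semidefinite, then for every d×n matrix X satisfying Iₙ - XᵀPX ⪰ 0, the block matrix [[H, F + GX],[(F + GX)ᵀ, C + XᵀB + BᵀX + XᵀAX]] is positive semidefinite. -/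

import Mathlib

open Matrix

lemma psd_smul_aux {n : ℕ} {Q : Matrix (Fin n) (Fin n) ℝ} (hQ : Q.PosSemidef)
    {c : ℝ} (hc : 0 ≤ c) : (c • Q).PosSemidef := by
  refine ⟨?_, fun x => ?_⟩
  · have := hQ.1.eq; simp only [Matrix.IsHermitian, Matrix.conjTranspose_smul, star_trivial, this]
  · exact (hQ.smul hc).2 x

lemma psd_corner_aux {m n : ℕ} {Q : Matrix (Fin n) (Fin n) ℝ} (hQ : Q.PosSemidef) :
    (Matrix.fromBlocks (0 : Matrix (Fin m) (Fin m) ℝ) 0 0 Q).PosSemidef := by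
  have h : Matrix.fromBlocks (0 : Matrix (Fin m) (Fin m) ℝ) 0 0 Q =
      (Matrix.fromCols (0 : Matrix (Fin n) (Fin m) ℝ) (1 : Matrix (Fin n) (Fin n) ℝ))ᴴ *
        Q * Matrix.fromCols (0 : Matrix (Fin n) (Fin m) ℝ) (1 : Matrix (Fin n) (Fin n) ℝ) := by
    rw [Matrix.conjTranspose_fromCols_eq_fromRows_conjTranspose]
    rw [Matrix.fromRows_mul, Matrix.fromRows_mul_fromCols]
    simp
  rw [h]
  exact hQ.conjTranspose_mul_mul_same _

theorem matrix_s_lemma_sufficiency {m n d : ℕ}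
    (H : Matrix (Fin m) (Fin m) ℝ) (hH : Hᵀ = H)
    (C : Matrix (Fin n) (Fin n) ℝ) (hC : Cᵀ = C)
    (A : Matrix (Fin d) (Fin d) ℝ) (hA : Aᵀ = A)
    (F : Matrix (Fin m) (Fin n) ℝ) (G : Matrix (Fin m) (Fin d) ℝ)
    (B : Matrix (Fin d) (Fin n) ℝ)
    (P : Matrix (Fin d) (Fin d) ℝ) (hP : P.PosSemidef)
    (lam : ℝ) (hlam : 0 ≤ lam)
    (hcert : (Matrix.fromBlocks H (Matrix.fromCols F G)
        (Matrix.fromRows Fᵀ Gᵀ)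
        (Matrix.fromBlocks (C - lam • (1 : Matrix (Fin n) (Fin n) ℝ)) Bᵀ
          B (A + lam • P))).PosSemidef) :
    ∀ X : Matrix (Fin d) (Fin n) ℝ,
      ((1 : Matrix (Fin n) (Fin n) ℝ) - Xᵀ * P * X).PosSemidef →
      (Matrix.fromBlocks H (F + G * X) (F + G * X)ᵀ
        (C + Xᵀ * B + Bᵀ * X + Xᵀ * A * X)).PosSemidef := by
  intro X hX
  have key : Matrix.fromBlocks H (F + G * X) (F + G * X)ᵀ
        (C + Xᵀ * B + Bᵀ * X + Xᵀ * A * X)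
      = (Matrix.fromBlocks 1 0 0 (Matrix.fromRows 1 X) :
          Matrix (Fin m ⊕ (Fin n ⊕ Fin d)) (Fin m ⊕ Fin n) ℝ)ᴴ *
        (Matrix.fromBlocks H (Matrix.fromCols F G)
          (Matrix.fromRows Fᵀ Gᵀ)
          (Matrix.fromBlocks (C - lam • (1 : Matrix (Fin n) (Fin n) ℝ)) Bᵀ
            B (A + lam • P))) *
        (Matrix.fromBlocks 1 0 0 (Matrix.fromRows 1 X) :
          Matrix (Fin m ⊕ (Fin n ⊕ Fin d)) (Fin m ⊕ Fin n) ℝ) +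
        Matrix.fromBlocks 0 0 0 (lam • ((1 : Matrix (Fin n) (Fin n) ℝ) - Xᵀ * P * X)) := by
    simp only [Matrix.fromBlocks_conjTranspose,
      Matrix.conjTranspose_fromRows_eq_fromCols_conjTranspose,
      Matrix.conjTranspose_one, Matrix.conjTranspose_zero, Matrix.fromBlocks_multiply,
      Matrix.fromCols_mul_fromRows, Matrix.fromBlocks_mul_fromRows,
      Matrix.fromCols_mul_fromBlocks,
      Matrix.mul_one, Matrix.one_mul, Matrix.mul_zero, Matrix.zero_mul,
      Matrix.fromBlocks_add, add_zero, zero_add, Matrix.fromRows_mul, Matrix.mul_fromCols]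
    rw [Matrix.fromBlocks_inj]
    refine ⟨by simp, by simp [Matrix.transpose_add, Matrix.transpose_mul],
      by simp [Matrix.transpose_add, Matrix.transpose_mul], ?_⟩
    simp only [Matrix.mul_add, Matrix.add_mul, Matrix.sub_mul, Matrix.mul_sub,
      Matrix.smul_mul, Matrix.mul_smul, smul_sub, Matrix.mul_one, Matrix.one_mul,
      Matrix.conjTranspose_eq_transpose_of_trivial]
    abel
  rw [key]
  exact (hcert.conjTranspose_mul_mul_same _).add (psd_corner_aux (psd_smul_aux hX hlam))
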